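/- The Hardy–Littlewood maximal operator ℳ is bounded from L¹(ρ) to L^{1,∞}(ρ) and bounded on L^p(ρ) for all p ∈ (1, ∞]; that is, there exists C > 0 with ρ({x ∈ S : ℳf(x) > α}) ≤ C‖f‖_{L¹}/α for all f ∈ L¹(ρ) and α > 0, and for every p ∈ (1, ∞] there exists C_p > 0 with ‖ℳf‖_{L^p} ≤ C_p ‖f‖_{L^p} for all f ∈ L^p(ρ). -/

import Mathlib

open MeasureTheory Set Filter
open scoped ENNReal NNReal Topology

noncomputable section

/-- The `ax+b`-group `S = ℝⁿ ⋉ ℝ`, as a measure space with its right Haar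
measure `ρ`, which is Lebesgue measure `dx dt` on `ℝⁿ × ℝ`. -/
abbrev Sp (n : ℕ) : Type := (Fin n → ℝ) × ℝ

/-- `Q` is a dyadic cube in `ℝⁿ` with side length `L` and center `c`. -/
def IsDyadicCube (n : ℕ) (Q : Set (Fin n → ℝ)) (L : ℝ) (c : Fin n → ℝ) : Prop :=
  ∃ (k : ℤ) (m : Fin n → ℤ), L = 2 ^ k ∧
    Q = {x | ∀ i, (m i : ℝ) * 2 ^ k ≤ x i ∧ x i < ((m i : ℝ) + 1) * 2 ^ k} ∧
    c = fun i => ((m i : ℝ) + 1 / 2) * 2 ^ k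

/-- Admissibility of the parameters `(Q, L, c, t, r)` of a Calderón–Zygmund set:
`Q` is a dyadic cube with side length `L` and center `c`, `r > 0`, and
`e² eᵗ r ≤ L < e⁸ eᵗ r` if `r < 1`, while `eᵗ e^{2r} ≤ L < eᵗ e^{8r}` if `r ≥ 1`. -/
def CZParam (n : ℕ) (Q : Set (Fin n → ℝ)) (L : ℝ) (c : Fin n → ℝ) (t r : ℝ) : Prop :=
  IsDyadicCube n Q L c ∧ 0 < r ∧
    (r < 1 → Real.exp 2 * Real.exp t * r ≤ L ∧ L < Real.exp 8 * Real.exp t * r) ∧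
    (1 ≤ r → Real.exp t * Real.exp (2 * r) ≤ L ∧ L < Real.exp t * Real.exp (8 * r))

/-- The set `Q × [t - r, t + r)` in `S`. -/
def czSet (n : ℕ) (Q : Set (Fin n → ℝ)) (t r : ℝ) : Set (Sp n) :=
  Q ×ˢ Set.Ico (t - r) (t + r)

/-- `R` is a Calderón–Zygmund set, i.e. a member of the family `ℛ`. -/
def IsCZSet (n : ℕ) (R : Set (Sp n)) : Prop :=
  ∃ Q L c t r, CZParam n Q L c t r ∧ R = czSet n Q t r

/-- Inverse hyperbolic cosine. -/
def arcoshR (x : ℝ) : ℝ := Real.log (x + Real.sqrt (x ^ 2 - 1))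

/-- The left-invariant Riemannian (hyperbolic) metric on `S`, given by
`cosh d((x,t),(x',t')) = (e^{t'-t} + e^{t-t'} + e^{-t-t'} |x-x'|²) / 2`. -/
def hypDist (n : ℕ) (p q : Sp n) : ℝ :=
  arcoshR ((Real.exp (q.2 - p.2) + Real.exp (p.2 - q.2) +
    Real.exp (-p.2 - q.2) * (∑ i, (p.1 i - q.1 i) ^ 2)) / 2)

/-- The open ball of center `p` and radius `r` for the hyperbolic metric. -/
def hypBall (n : ℕ) (p : Sp n) (r : ℝ) : Set (Sp n) := {q | hypDist n p q < r}

/-- The maximal function associated with a family `𝒜` of subsets of `S`: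
`x ↦ sup { ρ(R)⁻¹ ∫_R |f| dρ : R ∈ 𝒜, x ∈ R }`. -/
def maximalFn (n : ℕ) (𝒜 : Set (Set (Sp n))) (f : Sp n → ℝ) (x : Sp n) : ℝ≥0∞ :=
  ⨆ R ∈ 𝒜, ⨆ (_ : x ∈ R), (volume R)⁻¹ * ∫⁻ y in R, ‖f y‖₊ ∂volume

/-- The sharp maximal function associated with a family `𝒜` of subsets of `S`:
`x ↦ sup { ρ(R)⁻¹ ∫_R |f - f_R| dρ : R ∈ 𝒜, x ∈ R }`, where `f_R = ρ(R)⁻¹ ∫_R f dρ`. -/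
def sharpFn (n : ℕ) (𝒜 : Set (Set (Sp n))) (f : Sp n → ℝ) (x : Sp n) : ℝ≥0∞ :=
  ⨆ R ∈ 𝒜, ⨆ (_ : x ∈ R), (volume R)⁻¹ *
    ∫⁻ y in R, ENNReal.ofReal |f y - (volume R).toReal⁻¹ * ∫ z in R, f z ∂volume| ∂volume

/-- The `L^p`-norm (`p ∈ (0,∞]`) of an `ℝ≥0∞`-valued function. -/
def lpNormE {α : Type*} [MeasurableSpace α] (g : α → ℝ≥0∞) (p : ℝ≥0∞)
    (μ : Measure α) : ℝ≥0∞ :=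
  if p = ∞ then essSup g μ else (∫⁻ x, g x ^ p.toReal ∂μ) ^ (1 / p.toReal)

/-- `M` is a parent of `R`: both are Calderón–Zygmund sets, `M` can be decomposed into
`k` pairwise disjoint Calderón–Zygmund sets (`k = 2` or `k = 2ⁿ`) one of which is `R`,
and `(3/2) ρ(R) ≤ ρ(M) ≤ max{3, 2ⁿ} ρ(R)`. -/
def IsParent (n : ℕ) (M R : Set (Sp n)) : Prop :=
  IsCZSet n M ∧ IsCZSet n R ∧
    (∃ k : ℕ, (k = 2 ∨ k = 2 ^ n) ∧ ∃ Rs : Fin k → Set (Sp n),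
      (∀ i, IsCZSet n (Rs i)) ∧ Pairwise (Function.onFun Disjoint Rs) ∧
      M = ⋃ i, Rs i ∧ ∃ i, Rs i = R) ∧
    (3 / 2 : ℝ≥0∞) * volume R ≤ volume M ∧
    volume M ≤ (max 3 (2 ^ n) : ℕ) * volume R

/-- A dyadic grid on `S`: a collection `{𝒟_j}_{j ∈ ℤ}` of partitions of `S` into
pairwise disjoint Calderón–Zygmund sets with the nesting, parent, splitting and
limiting properties (i)–(v) of Theorem 3.1. -/
def IsDyadicGrid (n : ℕ) (D : ℤ → Set (Set (Sp n))) : Prop :=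
  (∀ j, ∀ R ∈ D j, IsCZSet n R) ∧
  (∀ j, (D j).PairwiseDisjoint id) ∧
  (∀ j, ⋃₀ D j = Set.univ) ∧
  (∀ l k : ℤ, l ≤ k → ∀ R ∈ D l, ∀ R' ∈ D k, R ⊆ R' ∨ R ∩ R' = ∅) ∧
  (∀ j, ∀ R ∈ D j, ∃! R', R' ∈ D (j + 1) ∧ R ⊆ R') ∧
  (∀ j, ∀ R ∈ D j, ∀ R' ∈ D (j + 1), R ⊆ R' → volume R' ≤ 2 ^ n * volume R) ∧
  (∀ j, ∀ R ∈ D j, ∃ k : ℕ, (k = 2 ∨ k = 2 ^ n) ∧ ∃ Rs : Fin k → Set (Sp n),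
    (∀ i, Rs i ∈ D (j - 1)) ∧ Pairwise (Function.onFun Disjoint Rs) ∧ R = ⋃ i, Rs i ∧
    ∀ i, volume R / 2 ^ n ≤ volume (Rs i) ∧ volume (Rs i) ≤ (2 / 3 : ℝ≥0∞) * volume R) ∧
  (∀ x : Sp n, ∀ Rx : ℤ → Set (Sp n), (∀ j, Rx j ∈ D j ∧ x ∈ Rx j) →
    Tendsto (fun j => volume (Rx j)) atBot (nhds 0) ∧
    Tendsto (fun j => volume (Rx j)) atTop (nhds ⊤))

/-- `a` is an `H¹`-atom supported in a set of the family `𝒜`: `a ∈ L¹` is supported in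
some `R ∈ 𝒜`, `‖a‖_∞ ≤ ρ(R)⁻¹` and `∫_S a dρ = 0`. -/
def IsAtomIn (n : ℕ) (𝒜 : Set (Set (Sp n))) (a : Sp n → ℂ) : Prop :=
  ∃ R ∈ 𝒜, Function.support a ⊆ R ∧
    (∀ᵐ x ∂(volume : Measure (Sp n)), ‖a x‖ ≤ (volume R).toReal⁻¹) ∧
    Integrable a volume ∧ ∫ x, a x ∂(volume : Measure (Sp n)) = 0

/-- `g = ∑_j lam_j a_j` is an atomic decomposition of `g` with atoms supported in sets of
the family `𝒜`: the `a_j` are atoms, `∑_j |lam_j| < ∞` and the series converges to `g`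
in `L¹`. -/
def IsAtomicDecomp (n : ℕ) (𝒜 : Set (Set (Sp n))) (g : Sp n → ℂ)
    (lam : ℕ → ℂ) (a : ℕ → Sp n → ℂ) : Prop :=
  Integrable g volume ∧ (∀ j, IsAtomIn n 𝒜 (a j)) ∧ Summable (fun j => ‖lam j‖) ∧
    Tendsto (fun N => ∫ x, ‖g x - ∑ j ∈ Finset.range N, lam j * a j x‖ ∂volume)
      atTop (nhds 0)

/-- The atomic `H¹`-norm of `g` associated with the family `𝒜`: the infimum of
`∑_j |lam_j|` over all atomic decompositions of `g` with atoms supported in sets of `𝒜`. -/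
def H1Norm (n : ℕ) (𝒜 : Set (Set (Sp n))) (g : Sp n → ℂ) : ℝ :=
  sInf {s : ℝ | ∃ lam a, IsAtomicDecomp n 𝒜 g lam a ∧ s = ∑' j, ‖lam j‖}

end

namespace CZAux

def dCube (n : ℕ) (k : ℤ) (m : Fin n → ℤ) : Set (Fin n → ℝ) :=
  {x | ∀ i, (m i : ℝ) * 2 ^ k ≤ x i ∧ x i < ((m i : ℝ) + 1) * 2 ^ k}

lemma dCube_eq_pi (n : ℕ) (k : ℤ) (m : Fin n → ℤ) : dCube n k m =
    Set.pi Set.univ (fun i => Set.Ico ((m i : ℝ) * 2 ^ k) (((m i : ℝ) + 1) * 2 ^ k)) := by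
  ext x; simp [dCube, Set.mem_pi, Set.mem_Ico]

lemma measurableSet_dCube (n : ℕ) (k : ℤ) (m : Fin n → ℤ) : MeasurableSet (dCube n k m) := by
  rw [dCube_eq_pi]; exact MeasurableSet.univ_pi fun i => measurableSet_Ico

lemma volume_dCube (n : ℕ) (k : ℤ) (m : Fin n → ℤ) :
    volume (dCube n k m) = ENNReal.ofReal ((2:ℝ) ^ k) ^ n := by
  rw [dCube_eq_pi, volume_pi_pi]
  have : ∀ i : Fin n, volume (Set.Ico ((m i : ℝ) * 2 ^ k) (((m i : ℝ) + 1) * 2 ^ k))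
      = ENNReal.ofReal ((2:ℝ) ^ k) := by
    intro i; rw [Real.volume_Ico]; ring_nf
  simp [this]

end CZAux

namespace CZAux

lemma dCube_subset (n : ℕ) {k K : ℤ} {m M : Fin n → ℤ} (hkK : k ≤ K)
    (hne : (dCube n k m ∩ dCube n K M).Nonempty) : dCube n k m ⊆ dCube n K M := by
  obtain ⟨x, hx, hX⟩ := hne
  have h2k : (0:ℝ) < 2 ^ k := by positivity
  obtain ⟨D, hDpos, hD⟩ : ∃ D : ℤ, 0 < D ∧ ((D : ℝ)) * 2 ^ k = 2 ^ K := by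
    refine ⟨2 ^ (K - k).toNat, by positivity, ?_⟩
    have h1 : ((2 ^ (K - k).toNat : ℤ) : ℝ) = 2 ^ ((K - k) : ℤ) := by
      push_cast
      rw [← zpow_natCast (2:ℝ) (K-k).toNat, Int.toNat_of_nonneg (sub_nonneg.2 hkK)]
    rw [h1, ← zpow_add₀ (two_ne_zero) (K - k) k]
    norm_num
  intro y hy i
  obtain ⟨hx1, hx2⟩ := hx i
  obtain ⟨hX1, hX2⟩ := hX i
  obtain ⟨hy1, hy2⟩ := hy i
  have hA : (M i) * D ≤ m i := by
    have h2 : ((M i * D : ℤ) : ℝ) * 2 ^ k < ((m i + 1 : ℤ) : ℝ) * 2 ^ k := by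
      push_cast
      calc (M i : ℝ) * D * 2 ^ k = (M i : ℝ) * 2 ^ K := by rw [← hD]; ring
        _ ≤ x i := hX1
        _ < ((m i : ℝ) + 1) * 2 ^ k := hx2
    have h2' := lt_of_mul_lt_mul_right h2 h2k.le
    have h3 : M i * D < m i + 1 := by exact_mod_cast h2'
    omega
  have hB : m i + 1 ≤ (M i + 1) * D := by
    have h2 : ((m i : ℤ) : ℝ) * 2 ^ k < (((M i + 1) * D : ℤ) : ℝ) * 2 ^ k := by
      push_cast
      calc (m i : ℝ) * 2 ^ k ≤ x i := hx1
        _ < ((M i : ℝ) + 1) * 2 ^ K := hX2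
        _ = ((M i : ℝ) + 1) * D * 2 ^ k := by rw [← hD]; ring
    have h2' := lt_of_mul_lt_mul_right h2 h2k.le
    have h3 : m i < (M i + 1) * D := by exact_mod_cast h2'
    omega
  constructor
  · calc (M i : ℝ) * 2 ^ K = ((M i * D : ℤ) : ℝ) * 2 ^ k := by push_cast; rw [← hD]; ring
      _ ≤ ((m i : ℤ) : ℝ) * 2 ^ k := by
          have h4 : ((M i * D : ℤ) : ℝ) ≤ ((m i : ℤ) : ℝ) := by exact_mod_cast hA
          exact mul_le_mul_of_nonneg_right h4 h2k.le
      _ ≤ y i := hy1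
  · calc y i < ((m i : ℝ) + 1) * 2 ^ k := hy2
      _ ≤ (((M i + 1) * D : ℤ) : ℝ) * 2 ^ k := by
          have h4 : ((m i + 1 : ℤ) : ℝ) ≤ (((M i + 1) * D : ℤ) : ℝ) := by exact_mod_cast hB
          push_cast at h4 ⊢
          nlinarith
      _ = ((M i : ℝ) + 1) * 2 ^ K := by push_cast; rw [← hD]; ring

lemma exists_ancestor (n : ℕ) (k : ℤ) (m : Fin n → ℤ) :
    ∃ M : Fin n → ℤ, dCube n k m ⊆ dCube n (k + 16) M := by
  refine ⟨fun i => m i / 65536, ?_⟩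
  have h2k : (0:ℝ) < 2 ^ k := by positivity
  have hsplit : (2:ℝ) ^ (k + 16) = 65536 * 2 ^ k := by
    rw [zpow_add₀ (two_ne_zero : (2:ℝ) ≠ 0)]
    norm_num
    ring
  intro y hy i
  obtain ⟨hy1, hy2⟩ := hy i
  have hdiv1 : (m i / 65536) * 65536 ≤ m i := by omega
  have hdiv2 : m i + 1 ≤ (m i / 65536 + 1) * 65536 := by omega
  constructor
  · calc ((m i / 65536 : ℤ) : ℝ) * 2 ^ (k + 16)
        = ((m i / 65536 * 65536 : ℤ) : ℝ) * 2 ^ k := by rw [hsplit]; push_cast; ring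
      _ ≤ ((m i : ℤ) : ℝ) * 2 ^ k := by
          have h4 : ((m i / 65536 * 65536 : ℤ) : ℝ) ≤ ((m i : ℤ) : ℝ) := by exact_mod_cast hdiv1
          exact mul_le_mul_of_nonneg_right h4 h2k.le
      _ ≤ y i := hy1
  · calc y i < ((m i : ℝ) + 1) * 2 ^ k := hy2
      _ ≤ (((m i / 65536 + 1) * 65536 : ℤ) : ℝ) * 2 ^ k := by
          have h4 : ((m i + 1 : ℤ) : ℝ) ≤ (((m i / 65536 + 1) * 65536 : ℤ) : ℝ) := by
            exact_mod_cast hdiv2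
          push_cast at h4 ⊢
          nlinarith
      _ = (((m i / 65536 : ℤ) : ℝ) + 1) * 2 ^ (k + 16) := by rw [hsplit]; push_cast; ring

end CZAux

namespace CZAux

def CZIneq (L t r : ℝ) : Prop :=
  0 < r ∧
    (r < 1 → Real.exp 2 * Real.exp t * r ≤ L ∧ L < Real.exp 8 * Real.exp t * r) ∧
    (1 ≤ r → Real.exp t * Real.exp (2 * r) ≤ L ∧ L < Real.exp t * Real.exp (8 * r))

lemma exp10_ge : (11:ℝ) ≤ Real.exp 10 := by nlinarith [Real.add_one_le_exp (10:ℝ)]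

lemma exp10_le : Real.exp 10 ≤ 30000 := by
  have h1 : Real.exp 10 = Real.exp 1 ^ (10:ℕ) := by
    rw [← Real.exp_nat_mul]; norm_num
  have h2 : Real.exp 1 ≤ 2.7182818286 := Real.exp_one_lt_d9.le
  have h3 : Real.exp 1 ^ (10:ℕ) ≤ 2.7182818286 ^ (10:ℕ) :=
    pow_le_pow_left₀ (Real.exp_pos 1).le h2 10
  nlinarith [h1, h3]

lemma exp_neg10_mul : Real.exp (-10) * Real.exp 10 = 1 := by
  rw [← Real.exp_add]; norm_num

lemma nine_exp_neg10 : 9 * Real.exp (-10) ≤ 1 := by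
  nlinarith [exp10_ge, exp_neg10_mul, Real.exp_pos (-10:ℝ)]

lemma exp_neg10_le_one : Real.exp (-10) ≤ 1 := by
  nlinarith [nine_exp_neg10, Real.exp_pos (-10:ℝ)]

lemma one_le_exp_two : (1:ℝ) ≤ Real.exp 2 := by nlinarith [Real.add_one_le_exp (2:ℝ)]

lemma lemG {L t r L' t' r' : ℝ}
    (h : CZIneq L t r) (h' : CZIneq L' t' r') (ht : |t - t'| < r + r')
    (hsmall : r' ≤ Real.exp (-10) * r) : L' ≤ L := by
  obtain ⟨hr, hs, hb⟩ := h
  obtain ⟨hr', hs', hb'⟩ := h'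
  have habs := abs_lt.1 ht
  have ht' : t' ≤ t + r + r' := by linarith [habs.1]
  rcases lt_or_ge r 1 with hr1 | hr1
  · -- r < 1, hence r' < 1
    have hr'1 : r' < 1 := by nlinarith [exp_neg10_le_one]
    obtain ⟨hL1, hL2⟩ := hs hr1
    obtain ⟨hL1', hL2'⟩ := hs' hr'1
    have key : Real.exp 8 * Real.exp t' * r' ≤ Real.exp t * r := by
      have e1 : Real.exp (8 + (r + r') + -10) ≤ 1 := by
        apply Real.exp_le_one_iff.2 ; linarith
      calc Real.exp 8 * Real.exp t' * r'
          ≤ Real.exp 8 * Real.exp (t + r + r') * (Real.exp (-10) * r) := by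
            gcongr <;> positivity
        _ = Real.exp (8 + (r + r') + -10) * (Real.exp t * r) := by
            simp only [Real.exp_add]; ring
        _ ≤ 1 * (Real.exp t * r) := by
            gcongr
        _ = Real.exp t * r := by ring
    have h1 : Real.exp t * r ≤ L := by
      nlinarith [mul_le_mul_of_nonneg_right one_le_exp_two
        (mul_nonneg (Real.exp_pos t).le hr.le)]
    linarith
  · -- 1 ≤ r
    obtain ⟨hL1, hL2⟩ := hb hr1
    rcases lt_or_ge r' 1 with hr'1 | hr'1
    · obtain ⟨hL1', hL2'⟩ := hs' hr'1
      have key : Real.exp 8 * Real.exp t' * r' ≤ Real.exp t * Real.exp (2 * r) := by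
        have hrle : r ≤ Real.exp (r - 1) := by nlinarith [Real.add_one_le_exp (r - 1)]
        calc Real.exp 8 * Real.exp t' * r'
            ≤ Real.exp 8 * Real.exp (t + r + 1) * (Real.exp (-10) * r) := by
              gcongr
              linarith
            _ = Real.exp (8 + (t + r + 1) + -10) * r := by
                simp only [Real.exp_add]; ring
            _ = Real.exp t * (Real.exp (r - 1) * r) := by
                rw [show 8 + (t + r + 1) + -10 = t + (r - 1) by ring, Real.exp_add]; ring
            _ ≤ Real.exp t * (Real.exp (r - 1) * Real.exp (r - 1)) := by gcongr
            _ = Real.exp t * Real.exp ((r-1) + (r-1)) := by rw [Real.exp_add]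
            _ ≤ Real.exp t * Real.exp (2 * r) := by
                gcongr
                linarith
      linarith
    · obtain ⟨hL1', hL2'⟩ := hb' hr'1
      have key : Real.exp t' * Real.exp (8 * r') ≤ Real.exp t * Real.exp (2 * r) := by
        calc Real.exp t' * Real.exp (8 * r')
            ≤ Real.exp (t + r + r') * Real.exp (8 * r') := by gcongr <;> positivity
          _ = Real.exp t * Real.exp (r + 9 * r') := by
              rw [← Real.exp_add, ← Real.exp_add]; ring_nf
          _ ≤ Real.exp t * Real.exp (2 * r) := by
              gcongr
              nlinarith [nine_exp_neg10]
      linarith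

end CZAux


namespace CZAux

lemma czIneq_of {n : ℕ} {Q L c t r} (h : CZParam n Q L c t r) : CZIneq L t r :=
  ⟨h.2.1, h.2.2.1, h.2.2.2⟩

lemma dCube_of {n : ℕ} {Q : Set (Fin n → ℝ)} {L : ℝ} {c : Fin n → ℝ}
    (h : IsDyadicCube n Q L c) : ∃ k m, L = 2 ^ k ∧ Q = dCube n k m := by
  obtain ⟨k, m, h1, h2, -⟩ := h
  exact ⟨k, m, h1, h2⟩

lemma volume_prodBox (n : ℕ) (k : ℤ) (m : Fin n → ℤ) (a b : ℝ) :
    volume (dCube n k m ×ˢ Set.Ico a b) = ENNReal.ofReal ((2:ℝ)^k) ^ n * ENNReal.ofReal (b - a) := by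
  rw [Measure.volume_eq_prod, Measure.prod_prod, volume_dCube, Real.volume_Ico]

lemma volume_czSet {n : ℕ} {Q : Set (Fin n → ℝ)} {L : ℝ} {c : Fin n → ℝ} (t r : ℝ)
    (hQ : IsDyadicCube n Q L c) :
    volume (czSet n Q t r) = ENNReal.ofReal L ^ n * ENNReal.ofReal (2 * r) := by
  obtain ⟨k, m, hL, hQ⟩ := dCube_of hQ
  rw [czSet, hQ, volume_prodBox, hL]
  congr 1
  ring_nf

lemma volume_czSet_pos {n : ℕ} {Q L c t r} (h : CZParam n Q L c t r) :
    0 < volume (czSet n Q t r) ∧ volume (czSet n Q t r) < ⊤ := by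
  obtain ⟨k, m, hL, -⟩ := dCube_of h.1
  rw [volume_czSet t r h.1]
  have hLpos : (0:ℝ) < L := by rw [hL]; positivity
  have hrpos : (0:ℝ) < 2 * r := by linarith [h.2.1]
  constructor
  · apply ENNReal.mul_pos
    · exact pow_ne_zero _ (by simpa [ENNReal.ofReal_eq_zero, not_le] using hLpos)
    · simpa [ENNReal.ofReal_eq_zero, not_le] using hrpos
  · exact ENNReal.mul_lt_top (ENNReal.pow_lt_top ENNReal.ofReal_lt_top) ENNReal.ofReal_lt_top

lemma L_pos {n : ℕ} {Q L c t r} (h : CZParam n Q L c t r) : (0:ℝ) < L := by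
  obtain ⟨k, m, hL, -⟩ := dCube_of h.1
  rw [hL]; positivity

set_option maxHeartbeats 2000000 in
/-- The engulfing lemma. -/
lemma engulf {n : ℕ} (hn : 1 ≤ n) {Q : Set (Fin n → ℝ)} {L : ℝ} {c : Fin n → ℝ} {t r : ℝ}
    (hR : CZParam n Q L c t r) :
    ∃ S : Set (Sp n), MeasurableSet S ∧
      volume S ≤ (65536 : ℝ≥0∞) ^ (n + 1) * volume (czSet n Q t r) ∧
      ∀ Q' L' c' t' r', CZParam n Q' L' c' t' r' →
        (czSet n Q t r ∩ czSet n Q' t' r').Nonempty →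
        volume (czSet n Q' t' r') ≤ 2 * volume (czSet n Q t r) →
        czSet n Q' t' r' ⊆ S := by
  obtain ⟨k, m, hLk, hQd⟩ := dCube_of hR.1
  have hr : 0 < r := hR.2.1
  have hL : (0:ℝ) < L := L_pos hR
  obtain ⟨M, hM⟩ := exists_ancestor n k m
  refine ⟨dCube n (k + 16) M ×ˢ Set.Ico (t - 65536 * r) (t + 65536 * r),
    (measurableSet_dCube _ _ _).prod measurableSet_Ico, ?_, ?_⟩
  · rw [volume_prodBox, volume_czSet t r hR.1, hLk]
    have h1 : (2:ℝ) ^ (k + 16) = 65536 * 2 ^ k := by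
      rw [zpow_add₀ (two_ne_zero : (2:ℝ) ≠ 0)]; norm_num; ring
    have h2 : t + 65536 * r - (t - 65536 * r) = 65536 * (2 * r) := by ring
    rw [h1, h2, ENNReal.ofReal_mul (by norm_num), ENNReal.ofReal_mul (by norm_num),
      mul_pow]
    have h3 : ENNReal.ofReal (65536:ℝ) = (65536 : ℝ≥0∞) := by norm_num
    rw [h3, pow_succ]
    apply le_of_eq
    ring
  · rintro Q' L' c' t' r' hR' ⟨x, hx, hx'⟩
    intro hvol
    obtain ⟨k', m', hLk', hQd'⟩ := dCube_of hR'.1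
    have hr' : 0 < r' := hR'.2.1
    have hL' : (0:ℝ) < L' := L_pos hR'
    -- t-overlap
    have hx2 := hx.2; have hx2' := hx'.2
    simp only [czSet, Set.mem_prod, Set.mem_Ico] at hx hx'
    have htov : |t - t'| < r + r' := by
      rw [abs_lt]; constructor <;> [linarith [hx.2.1, hx'.2.2]; linarith [hx.2.2, hx'.2.1]]
    have htov' : |t' - t| < r' + r := by rw [abs_sub_comm] at htov; linarith [abs_lt.1 htov] 
    -- real volume inequality
    have hvolR : r' * L' ^ n ≤ 2 * (r * L ^ n) := by
      rw [volume_czSet t r hR.1, volume_czSet t' r' hR'.1] at hvol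
      have e1 : ENNReal.ofReal (L' ^ n * (2 * r')) = ENNReal.ofReal L' ^ n * ENNReal.ofReal (2 * r') := by
        rw [ENNReal.ofReal_mul (by positivity), ENNReal.ofReal_pow hL'.le]
      have e2 : ENNReal.ofReal (2 * (L ^ n * (2 * r))) = 2 * (ENNReal.ofReal L ^ n * ENNReal.ofReal (2 * r)) := by
        rw [ENNReal.ofReal_mul (by norm_num), ENNReal.ofReal_mul (by positivity),
          ENNReal.ofReal_pow hL.le, ENNReal.ofReal_ofNat]
      rw [← e1, ← e2] at hvol
      have hre := (ENNReal.ofReal_le_ofReal_iff (by positivity)).1 hvol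
      nlinarith [hre]
    -- (i) r' ≤ exp 10 * r
    have hi : r' ≤ Real.exp 10 * r := by
      by_contra hcon
      push_neg at hcon
      have hrr : r ≤ Real.exp (-10) * r' := by
        have := exp_neg10_mul
        nlinarith [Real.exp_pos (-10:ℝ)]
      have hLL : L ≤ L' := lemG (czIneq_of hR') (czIneq_of hR) htov' hrr
      have hpow : L ^ n ≤ L' ^ n := pow_le_pow_left₀ hL.le hLL n
      have hLn : (0:ℝ) < L ^ n := by positivity
      have k1 : r' * L ^ n ≤ r' * L' ^ n := mul_le_mul_of_nonneg_left hpow hr'.le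
      have k2 : Real.exp 10 * r * L ^ n < r' * L ^ n := mul_lt_mul_of_pos_right hcon hLn
      have k3 : 11 * (r * L ^ n) ≤ Real.exp 10 * (r * L ^ n) :=
        mul_le_mul_of_nonneg_right exp10_ge (mul_pos hr hLn).le
      have k4 : 0 < r * L ^ n := mul_pos hr hLn
      nlinarith [k1, k2, k3, k4]
    -- (ii) L' ≤ 65536 * L
    have hii : L' ≤ 65536 * L := by
      rcases le_or_gt r' (Real.exp (-10) * r) with hc | hc
      · have := lemG (czIneq_of hR) (czIneq_of hR') htov hc
        nlinarith
      · rcases le_or_gt L' L with hc2 | hc2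
        · nlinarith
        · have hrr' : r ≤ Real.exp 10 * r' := by
            have := exp_neg10_mul
            nlinarith [Real.exp_pos (10:ℝ), Real.exp_pos (-10:ℝ)]
          obtain ⟨j, hj⟩ : ∃ j, n = j + 1 := ⟨n - 1, by omega⟩
          have hLn' : L' ^ n ≤ 2 * Real.exp 10 * L ^ n := by
            have k6 : 2 * (r * L ^ n) ≤ 2 * ((Real.exp 10 * r') * L ^ n) := by
              have := mul_le_mul_of_nonneg_right hrr' (pow_pos hL n).le
              linarith
            have k7 : r' * L' ^ n ≤ r' * (2 * Real.exp 10 * L ^ n) := by nlinarith [hvolR]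
            exact le_of_mul_le_mul_left k7 hr'
          rw [hj, pow_succ, pow_succ] at hLn'
          have hmono : L ^ j ≤ L' ^ j := pow_le_pow_left₀ hL.le hc2.le _
          have hLj : (0:ℝ) < L ^ j := by positivity
          have k5 : L' * L ^ j ≤ L' * L' ^ j := mul_le_mul_of_nonneg_left hmono hL'.le
          have key : L' * L ^ j ≤ (2 * Real.exp 10 * L) * L ^ j := by nlinarith [k5, hLn']
          have hfin := le_of_mul_le_mul_right key hLj
          have h60 : 2 * Real.exp 10 * L ≤ 60000 * L := by nlinarith [exp10_le, hL]
          linarith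
    -- cube inclusion
    have hk' : k' ≤ k + 16 := by
      by_contra hcon
      push_neg at hcon
      have h1 : (2:ℝ) ^ (k + 16) < 2 ^ k' := by
        apply zpow_lt_zpow_right₀ (by norm_num) hcon
      have h2 : (2:ℝ) ^ (k+16) = 65536 * 2 ^ k := by
        rw [zpow_add₀ (two_ne_zero : (2:ℝ) ≠ 0)]; norm_num; ring
      rw [← hLk', h2, ← hLk] at h1
      linarith
    have hQQ : Q' ⊆ dCube n (k + 16) M := by
      rw [hQd']
      apply dCube_subset n hk'
      refine ⟨x.1, ?_, hM ?_⟩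
      · rw [← hQd']; exact hx'.1
      · rw [← hQd]; exact hx.1
    -- interval inclusion
    have hIco : Set.Ico (t' - r') (t' + r') ⊆ Set.Ico (t - 65536 * r) (t + 65536 * r) := by
      have hr30 : r' ≤ 30000 * r := by
        have h5 : Real.exp 10 * r ≤ 30000 * r := mul_le_mul_of_nonneg_right exp10_le hr.le
        linarith
      have habs2 := abs_lt.1 htov
      apply Set.Ico_subset_Ico <;> [linarith [habs2.1]; linarith [habs2.2]]
    rw [czSet, hQd']
    rw [hQd'] at hQQ
    exact Set.prod_mono hQQ hIco

end CZAux


namespace CZAux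

lemma isCZSet_measurable {n : ℕ} {R : Set (Sp n)} (h : IsCZSet n R) : MeasurableSet R := by
  obtain ⟨Q, L, c, t, r, hP, rfl⟩ := h
  obtain ⟨k, m, -, hQ⟩ := dCube_of hP.1
  rw [czSet, hQ]
  exact (measurableSet_dCube _ _ _).prod measurableSet_Ico

lemma isCZSet_vol {n : ℕ} {R : Set (Sp n)} (h : IsCZSet n R) :
    0 < volume R ∧ volume R < ⊤ := by
  obtain ⟨Q, L, c, t, r, hP, rfl⟩ := h
  exact volume_czSet_pos hP

/-- Engulfing, stated for CZ sets. -/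
lemma engulf' {n : ℕ} (hn : 1 ≤ n) {R : Set (Sp n)} (h : IsCZSet n R) :
    ∃ S : Set (Sp n), volume S ≤ (65536 : ℝ≥0∞) ^ (n + 1) * volume R ∧
      ∀ R', IsCZSet n R' → (R ∩ R').Nonempty → volume R' ≤ 2 * volume R → R' ⊆ S := by
  obtain ⟨Q, L, c, t, r, hP, rfl⟩ := h
  obtain ⟨S, -, hvol, hsub⟩ := engulf hn hP
  refine ⟨S, hvol, ?_⟩
  rintro R' ⟨Q', L', c', t', r', hP', rfl⟩ hne hle
  exact hsub Q' L' c' t' r' hP' hne hle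

lemma weak11 {n : ℕ} (hn : 1 ≤ n) (f : Sp n → ℝ) (α : ℝ) (hα : 0 < α) :
    volume {x : Sp n | ENNReal.ofReal α < maximalFn n {R | IsCZSet n R} f x}
      ≤ ENNReal.ofReal ((65536:ℝ) ^ (n+1) / α) * ∫⁻ x, ‖f x‖₊ ∂volume := by
  classical
  set I := ∫⁻ x, ‖f x‖₊ ∂(volume : Measure (Sp n)) with hIdef
  set E := {x : Sp n | ENNReal.ofReal α < maximalFn n {R | IsCZSet n R} f x} with hEdef
  have hCpos : (0:ℝ) < (65536:ℝ) ^ (n+1) / α := by positivity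
  rcases eq_or_ne I ⊤ with hItop | hItop
  · rw [hItop, ENNReal.mul_top (by simp [ENNReal.ofReal_eq_zero, not_le, hCpos])]
    exact le_top
  have hα0 : (ENNReal.ofReal α) ≠ 0 := by simp [ENNReal.ofReal_eq_zero, not_le, hα]
  have hαt : (ENNReal.ofReal α) ≠ ⊤ := ENNReal.ofReal_ne_top
  -- choose a CZ set for each point of E
  have hch : ∀ x : Sp n, ∃ R : Set (Sp n), x ∈ E →
      IsCZSet n R ∧ x ∈ R ∧ ENNReal.ofReal α * volume R ≤ ∫⁻ y in R, ‖f y‖₊ ∂volume := by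
    intro x
    by_cases hx : x ∈ E
    · have hx' : ENNReal.ofReal α < maximalFn n {R | IsCZSet n R} f x := hx
      rw [maximalFn] at hx'
      simp only [lt_iSup_iff, Set.mem_setOf_eq] at hx'
      obtain ⟨R, hRcz, hxR, hlt⟩ := hx'
      refine ⟨R, fun _ => ⟨hRcz, hxR, ?_⟩⟩
      obtain ⟨hv0, hvt⟩ := isCZSet_vol hRcz
      calc ENNReal.ofReal α * volume R
          ≤ ((volume R)⁻¹ * ∫⁻ y in R, ‖f y‖₊ ∂volume) * volume R :=
            mul_le_mul_left hlt.le _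
        _ = (∫⁻ y in R, ‖f y‖₊ ∂volume) * ((volume R)⁻¹ * volume R) := by ring
        _ = ∫⁻ y in R, ‖f y‖₊ ∂volume := by
            rw [ENNReal.inv_mul_cancel hv0.ne' hvt.ne, mul_one]
    · exact ⟨∅, fun h => absurd h hx⟩
  choose B hB using hch
  have hBvol : ∀ x ∈ E, volume (B x) ≤ (ENNReal.ofReal α)⁻¹ * I := by
    intro x hx
    obtain ⟨hcz, hxB, havg⟩ := hB x hx
    calc volume (B x) = (ENNReal.ofReal α)⁻¹ * (ENNReal.ofReal α * volume (B x)) := by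
          rw [← mul_assoc, ENNReal.inv_mul_cancel hα0 hαt, one_mul]
      _ ≤ (ENNReal.ofReal α)⁻¹ * ∫⁻ y in B x, ‖f y‖₊ ∂volume := mul_le_mul_right havg _
      _ ≤ (ENNReal.ofReal α)⁻¹ * I := mul_le_mul_right (setLIntegral_le_lintegral _ _) _
  have hBfin : ∀ x ∈ E, volume (B x) < ⊤ := fun x hx => (isCZSet_vol (hB x hx).1).2
  have hBpos : ∀ x ∈ E, 0 < volume (B x) := fun x hx => (isCZSet_vol (hB x hx).1).1
  -- Vitali
  obtain ⟨u, hut, hdisj, hcover⟩ :=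
    Vitali.exists_disjoint_subfamily_covering_enlargement B E (fun x => (volume (B x)).toReal)
      2 (by norm_num) (fun a _ => ENNReal.toReal_nonneg)
      (((ENNReal.ofReal α)⁻¹ * I).toReal)
      (fun a ha => ENNReal.toReal_mono
        (by exact ENNReal.mul_ne_top (ENNReal.inv_ne_top.2 hα0) hItop) (hBvol a ha))
      (fun a ha => ⟨a, (hB a ha).2.1⟩)
  -- countability of u
  have hcnt : u.Countable := by
    have hmeas : ∀ b : ↥u, MeasurableSet (B (b:Sp n)) :=
      fun b => isCZSet_measurable (hB b (hut b.2)).1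
    have hdisj' : Pairwise (Function.onFun Disjoint (fun b : ↥u => B (b:Sp n))) := by
      intro i j hij
      exact hdisj i.2 j.2 (fun h => hij (Subtype.ext h))
    have := MeasureTheory.Measure.countable_meas_pos_of_disjoint_iUnion
      (μ := (volume : Measure (Sp n))) hmeas hdisj'
    have huniv : (Set.univ : Set ↥u) ⊆ {i : ↥u | 0 < volume (B (i:Sp n))} :=
      fun b _ => hBpos b (hut b.2)
    have : (Set.univ : Set ↥u).Countable := this.mono huniv
    rw [Set.countable_univ_iff] at this
    exact Set.countable_coe_iff.1 this
  -- stars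
  have hstar : ∀ b : Sp n, ∃ S : Set (Sp n), b ∈ u →
      volume S ≤ (65536 : ℝ≥0∞) ^ (n + 1) * volume (B b) ∧
      ∀ R', IsCZSet n R' → (B b ∩ R').Nonempty → volume R' ≤ 2 * volume (B b) → R' ⊆ S := by
    intro b
    by_cases hb : b ∈ u
    · obtain ⟨S, h1, h2⟩ := engulf' hn (hB b (hut hb)).1
      exact ⟨S, fun _ => ⟨h1, h2⟩⟩
    · exact ⟨∅, fun h => absurd h hb⟩
  choose S hS using hstar
  -- coverage
  have hcov : E ⊆ ⋃ b ∈ u, S b := by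
    intro x hx
    obtain ⟨b, hbu, hne, hle⟩ := hcover x hx
    have hbE := hut hbu
    have hlevol : volume (B x) ≤ 2 * volume (B b) := by
      calc volume (B x) = ENNReal.ofReal ((volume (B x)).toReal) := by
            rw [ENNReal.ofReal_toReal (hBfin x hx).ne]
        _ ≤ ENNReal.ofReal (2 * (volume (B b)).toReal) := ENNReal.ofReal_le_ofReal hle
        _ = 2 * volume (B b) := by
            rw [ENNReal.ofReal_mul (by norm_num), ENNReal.ofReal_ofNat,
              ENNReal.ofReal_toReal (hBfin b hbE).ne]
    have hxS : B x ⊆ S b := (hS b hbu).2 (B x) (hB x hx).1 (by rwa [Set.inter_comm]) hlevol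
    exact Set.mem_biUnion hbu (hxS (hB x hx).2.1)
  -- sum up
  have hsum : volume E ≤ (65536 : ℝ≥0∞) ^ (n + 1) * ((ENNReal.ofReal α)⁻¹ * I) := by
    calc volume E ≤ volume (⋃ b ∈ u, S b) := measure_mono hcov
      _ ≤ ∑' (b : ↥u), volume (S b) := measure_biUnion_le volume hcnt _
      _ ≤ ∑' (b : ↥u), (65536 : ℝ≥0∞) ^ (n + 1) * volume (B (b:Sp n)) :=
          ENNReal.tsum_le_tsum (fun b => (hS b b.2).1)
      _ = (65536 : ℝ≥0∞) ^ (n + 1) * ∑' (b : ↥u), volume (B (b:Sp n)) := ENNReal.tsum_mul_left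
      _ ≤ (65536 : ℝ≥0∞) ^ (n + 1) * ((ENNReal.ofReal α)⁻¹ * I) := by
          apply mul_le_mul_right
          have hcnt' : Countable ↥u := hcnt.to_subtype
          calc ∑' (b : ↥u), volume (B (b:Sp n))
              ≤ ∑' (b : ↥u), (ENNReal.ofReal α)⁻¹ * ∫⁻ y in B (b:Sp n), ‖f y‖₊ ∂volume := by
                apply ENNReal.tsum_le_tsum
                intro b
                obtain ⟨hcz, hxB, havg⟩ := hB b (hut b.2)
                calc volume (B (b:Sp n))
                    = (ENNReal.ofReal α)⁻¹ * (ENNReal.ofReal α * volume (B (b:Sp n))) := by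
                      rw [← mul_assoc, ENNReal.inv_mul_cancel hα0 hαt, one_mul]
                  _ ≤ (ENNReal.ofReal α)⁻¹ * ∫⁻ y in B (b:Sp n), ‖f y‖₊ ∂volume :=
                      mul_le_mul_right havg _
            _ = (ENNReal.ofReal α)⁻¹ * ∑' (b : ↥u), ∫⁻ y in B (b:Sp n), ‖f y‖₊ ∂volume :=
                ENNReal.tsum_mul_left
            _ ≤ (ENNReal.ofReal α)⁻¹ * I := by
                apply mul_le_mul_right
                have hmeas : ∀ b : ↥u, MeasurableSet (B (b:Sp n)) :=
                  fun b => isCZSet_measurable (hB b (hut b.2)).1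
                have hdisj' : Pairwise (Function.onFun Disjoint (fun b : ↥u => B (b:Sp n))) :=
                  fun i j hij => hdisj i.2 j.2 (fun h => hij (Subtype.ext h))
                rw [← lintegral_iUnion hmeas hdisj' _]
                exact setLIntegral_le_lintegral _ _
  calc volume E ≤ (65536 : ℝ≥0∞) ^ (n + 1) * ((ENNReal.ofReal α)⁻¹ * I) := hsum
    _ = ENNReal.ofReal ((65536:ℝ) ^ (n+1) / α) * I := by
        rw [ENNReal.ofReal_div_of_pos hα, ENNReal.ofReal_pow (by norm_num : (0:ℝ) ≤ 65536),
          div_eq_mul_inv, show ENNReal.ofReal (65536:ℝ) = (65536:ℝ≥0∞) by norm_num]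
        ring

end CZAux


namespace CZAux

lemma lintegral_le_tsum_levels {β : Type*} [MeasurableSpace β] (μ : Measure β) (g : β → ℝ≥0∞) :
    ∫⁻ x, g x ∂μ ≤ ∑' (k : ℤ), 2 ^ (k + 2) * μ {x | 2 ^ k < g x} := by
  classical
  set Bk : ℤ → Set β := fun k => toMeasurable μ {x | (2:ℝ≥0∞) ^ k < g x} with hBk
  have hmeas : ∀ k, MeasurableSet (Bk k) := fun k => measurableSet_toMeasurable _ _
  have hsub : ∀ k : ℤ, {x | (2:ℝ≥0∞) ^ k < g x} ⊆ Bk k := fun k => subset_toMeasurable _ _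
  have htop : ∑' (k : ℤ), (2:ℝ≥0∞) ^ (k + 2) = ⊤ := by
    rw [eq_top_iff]
    calc (⊤:ℝ≥0∞) = ∑' (k : ℤ), (Set.Ici (0:ℤ)).indicator (fun _ => (1:ℝ≥0∞)) k := by
          rw [← tsum_subtype]
          haveI : Infinite (Set.Ici (0:ℤ)) := Set.infinite_coe_iff.2 (Set.Ici_infinite 0)
          exact (ENNReal.tsum_const_eq_top_of_ne_zero one_ne_zero).symm
      _ ≤ ∑' (k : ℤ), (2:ℝ≥0∞) ^ (k + 2) := by
          apply ENNReal.tsum_le_tsum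
          intro k
          by_cases hk : k ∈ Set.Ici (0:ℤ)
          · rw [Set.indicator_of_mem hk]
            calc (1:ℝ≥0∞) = 2 ^ (0:ℤ) := (zpow_zero 2).symm
              _ ≤ 2 ^ (k+2) := ENNReal.zpow_le_of_le (by norm_num)
                  (by simp only [Set.mem_Ici] at hk; omega)
          · rw [Set.indicator_of_notMem hk]; exact zero_le
  have hG : ∀ x, g x ≤ ∑' (k : ℤ), (Bk k).indicator (fun _ => (2:ℝ≥0∞) ^ (k + 2)) x := by
    intro x
    rcases eq_or_ne (g x) 0 with h0 | h0
    · rw [h0]; exact zero_le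
    rcases eq_or_ne (g x) ⊤ with ht | ht
    · have hx : ∀ k : ℤ, x ∈ Bk k := fun k => hsub k (by
        simp only [Set.mem_setOf_eq, ht]
        exact ENNReal.zpow_lt_top (by norm_num) (by norm_num) k)
      have heq : ∀ k : ℤ, (Bk k).indicator (fun _ => (2:ℝ≥0∞) ^ (k + 2)) x = 2 ^ (k+2) :=
        fun k => Set.indicator_of_mem (hx k) _
      rw [ht, tsum_congr heq, htop]
    · obtain ⟨k, hk1, hk2⟩ := ENNReal.exists_mem_Ico_zpow h0 ht
        (by norm_num : (1:ℝ≥0∞) < 2) (by norm_num)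
      have hlt : (2:ℝ≥0∞) ^ (k-1) < 2 ^ k := by
        have hpos : (0:ℝ≥0∞) < (2:ℝ≥0∞)^(k-1) := ENNReal.zpow_pos (by norm_num) (by norm_num) _
        have hne : (2:ℝ≥0∞)^(k-1) ≠ ⊤ := (ENNReal.zpow_lt_top (by norm_num) (by norm_num) _).ne
        calc (2:ℝ≥0∞)^(k-1) = 2^(k-1) * 1 := (mul_one _).symm
          _ < 2^(k-1) * 2 := (ENNReal.mul_lt_mul_iff_right hpos.ne' hne).2 (by norm_num)
          _ = 2 ^ k := by
              have h9 := ENNReal.zpow_add (x := (2:ℝ≥0∞)) (by norm_num) (by norm_num) (k-1) 1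
              rw [zpow_one] at h9
              rw [← h9]
              norm_num
      have hxk : x ∈ Bk (k - 1) := hsub _ (lt_of_lt_of_le hlt hk1)
      calc g x ≤ 2 ^ (k + 1) := hk2.le
        _ = (Bk (k-1)).indicator (fun _ => (2:ℝ≥0∞) ^ ((k-1) + 2)) x := by
            rw [Set.indicator_of_mem hxk, show k - 1 + 2 = k + 1 by ring]
        _ ≤ ∑' (j : ℤ), (Bk j).indicator (fun _ => (2:ℝ≥0∞) ^ (j + 2)) x :=
            ENNReal.le_tsum (k-1)
  calc ∫⁻ x, g x ∂μ
      ≤ ∫⁻ x, ∑' (k : ℤ), (Bk k).indicator (fun _ => (2:ℝ≥0∞) ^ (k + 2)) x ∂μ :=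
        lintegral_mono hG
    _ = ∑' (k : ℤ), ∫⁻ x, (Bk k).indicator (fun _ => (2:ℝ≥0∞) ^ (k + 2)) x ∂μ :=
        lintegral_tsum (fun k => ((measurable_const).indicator (hmeas k)).aemeasurable)
    _ = ∑' (k : ℤ), 2 ^ (k + 2) * μ (Bk k) := by
        apply tsum_congr
        intro k
        rw [lintegral_indicator (hmeas k), setLIntegral_const]
    _ = ∑' (k : ℤ), 2 ^ (k + 2) * μ {x | 2 ^ k < g x} := by
        apply tsum_congr
        intro k
        rw [hBk, measure_toMeasurable]

end CZAux


namespace CZAux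

lemma maximalFn_congr {n : ℕ} (𝒜 : Set (Set (Sp n))) {f g : Sp n → ℝ}
    (h : f =ᵐ[(volume : Measure (Sp n))] g) :
    maximalFn n 𝒜 f = maximalFn n 𝒜 g := by
  funext x
  unfold maximalFn
  apply iSup_congr; intro R
  apply iSup_congr; intro hR
  apply iSup_congr; intro hx
  congr 1
  apply lintegral_congr_ae
  apply ae_restrict_of_ae
  filter_upwards [h] with y hy
  rw [hy]

lemma le_maximalFn {n : ℕ} (𝒜 : Set (Set (Sp n))) (f : Sp n → ℝ) {x : Sp n} {R : Set (Sp n)}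
    (hR : R ∈ 𝒜) (hx : x ∈ R) :
    (volume R)⁻¹ * ∫⁻ y in R, ‖f y‖₊ ∂volume ≤ maximalFn n 𝒜 f x :=
  le_iSup_of_le R (le_iSup_of_le hR (le_iSup_of_le hx le_rfl))

lemma maximalFn_le_add {n : ℕ} {f f₁ f₂ : Sp n → ℝ}
    (hsplit : ∀ y, (‖f y‖₊ : ℝ≥0∞) = (‖f₁ y‖₊ : ℝ≥0∞) + (‖f₂ y‖₊ : ℝ≥0∞))
    (hm : Measurable fun y => (‖f₁ y‖₊ : ℝ≥0∞)) (x : Sp n) :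
    maximalFn n {R | IsCZSet n R} f x ≤
      maximalFn n {R | IsCZSet n R} f₁ x + maximalFn n {R | IsCZSet n R} f₂ x := by
  apply iSup₂_le; intro R hR
  apply iSup_le; intro hx
  have hadd : ∫⁻ y in R, ‖f y‖₊ ∂volume
      = (∫⁻ y in R, ‖f₁ y‖₊ ∂volume) + ∫⁻ y in R, ‖f₂ y‖₊ ∂volume := by
    rw [← lintegral_add_left hm]
    exact lintegral_congr fun y => hsplit y
  rw [hadd, mul_add]
  exact add_le_add (le_maximalFn _ _ hR hx) (le_maximalFn _ _ hR hx)

lemma maximalFn_le_const {n : ℕ} {f : Sp n → ℝ} {c : ℝ≥0∞}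
    (hb : ∀ᵐ y ∂(volume : Measure (Sp n)), (‖f y‖₊ : ℝ≥0∞) ≤ c) (x : Sp n) :
    maximalFn n {R | IsCZSet n R} f x ≤ c := by
  apply iSup₂_le; intro R hR
  apply iSup_le; intro hx
  obtain ⟨hv0, hvt⟩ := isCZSet_vol hR
  have h1 : ∫⁻ y in R, ‖f y‖₊ ∂volume ≤ c * volume R := by
    calc ∫⁻ y in R, ‖f y‖₊ ∂volume ≤ ∫⁻ _ in R, c ∂volume :=
          lintegral_mono_ae (ae_restrict_of_ae hb)
      _ = c * volume R := setLIntegral_const _ _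
  calc (volume R)⁻¹ * ∫⁻ y in R, ‖f y‖₊ ∂volume ≤ (volume R)⁻¹ * (c * volume R) :=
        mul_le_mul_right h1 _
    _ = c * ((volume R)⁻¹ * volume R) := by ring
    _ = c := by rw [ENNReal.inv_mul_cancel hv0.ne' hvt.ne, mul_one]

/-- Truncation above level `lam`. -/
noncomputable def trunc (lam : ℝ) (f : (Fin m → ℝ) × ℝ → ℝ) : (Fin m → ℝ) × ℝ → ℝ :=
  fun y => if lam < |f y| then f y else 0

/-- Truncation below level `lam`. -/
noncomputable def trunc' (lam : ℝ) (f : (Fin m → ℝ) × ℝ → ℝ) : (Fin m → ℝ) × ℝ → ℝ :=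
  fun y => if lam < |f y| then 0 else f y

lemma trunc_split {m : ℕ} (lam : ℝ) (f : Sp m → ℝ) (y : Sp m) :
    (‖f y‖₊ : ℝ≥0∞) = (‖trunc lam f y‖₊ : ℝ≥0∞) + (‖trunc' lam f y‖₊ : ℝ≥0∞) := by
  unfold trunc trunc'
  by_cases h : lam < |f y| <;> simp [h]

lemma trunc'_le {m : ℕ} {lam : ℝ} (hlam : 0 ≤ lam) (f : Sp m → ℝ) (y : Sp m) :
    (‖trunc' lam f y‖₊ : ℝ≥0∞) ≤ ENNReal.ofReal lam := by
  rw [← enorm_eq_nnnorm, Real.enorm_eq_ofReal_abs]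
  apply ENNReal.ofReal_le_ofReal
  unfold trunc'
  by_cases h : lam < |f y| <;> simp [h]
  · exact hlam
  · exact le_of_not_gt h

lemma trunc_enorm {m : ℕ} (lam : ℝ) (f : Sp m → ℝ) (y : Sp m) :
    (‖trunc lam f y‖₊ : ℝ≥0∞)
      = ({z : Sp m | lam < |f z|}).indicator (fun z => (‖f z‖₊ : ℝ≥0∞)) y := by
  unfold trunc
  by_cases h : lam < |f y| <;> simp [Set.indicator, h]

lemma trunc_enorm_measurable {m : ℕ} (lam : ℝ) {f : Sp m → ℝ} (hf : Measurable f) :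
    Measurable fun y => (‖trunc lam f y‖₊ : ℝ≥0∞) := by
  have hset : MeasurableSet {z : Sp m | lam < |f z|} :=
    measurableSet_lt measurable_const hf.abs
  have : (fun y => (‖trunc lam f y‖₊ : ℝ≥0∞))
      = ({z : Sp m | lam < |f z|}).indicator (fun z => (‖f z‖₊ : ℝ≥0∞)) := by
    funext y; exact trunc_enorm lam f y
  rw [this]
  exact (hf.enorm).indicator hset

end CZAux


namespace CZAux

lemma inner_sum_le {q : ℝ} (hq : 1 < q) (v : ℝ) (hv : 0 ≤ v) :
    (∑' k : ℤ, (2:ℝ≥0∞) ^ ((k:ℝ) * (1 - 1/q)) *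
        (if (2:ℝ) ^ ((k:ℝ)/q - 1) < v then ENNReal.ofReal v else 0))
      ≤ (1 - (2:ℝ≥0∞) ^ (-(1 - 1/q)))⁻¹ * (2:ℝ≥0∞) ^ (q - 1)
          * (ENNReal.ofReal v) ^ q := by
  have hq0 : (0:ℝ) < q := lt_trans one_pos hq
  set s : ℝ := 1 - 1/q with hsdef
  have hs : 0 < s := by
    have : 1/q < 1 := by rw [div_lt_one hq0]; exact hq
    simp only [hsdef]; linarith
  set a := ENNReal.ofReal v with hadef
  rcases eq_or_lt_of_le hv with hv0 | hv0
  · have hzero : ∀ k : ℤ, (2:ℝ≥0∞) ^ ((k:ℝ) * s) *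
        (if (2:ℝ) ^ ((k:ℝ)/q - 1) < v then a else 0) = 0 := by
      intro k
      rw [if_neg, mul_zero]
      rw [← hv0]
      exact not_lt.2 (Real.rpow_pos_of_pos two_pos _).le
    rw [tsum_congr hzero, tsum_zero]
    exact zero_le
  · set T : ℤ → Prop := fun k => (2:ℝ) ^ ((k:ℝ)/q - 1) < v with hTdef
    have ha0 : a ≠ 0 := by simp [hadef, ENNReal.ofReal_eq_zero, not_le, hv0]
    have hat : a ≠ ⊤ := ENNReal.ofReal_ne_top
    have hbdd : ∃ b : ℤ, ∀ z : ℤ, T z → z ≤ b := by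
      refine ⟨⌈q * (Real.logb 2 v + 1)⌉, ?_⟩
      intro z hz
      have h1 : (2:ℝ) ^ ((z:ℝ)/q - 1) < 2 ^ (Real.logb 2 v) := by
        rw [Real.rpow_logb two_pos (by norm_num) hv0]; exact hz
      have h2 : (z:ℝ)/q - 1 < Real.logb 2 v :=
        (Real.rpow_lt_rpow_left_iff (by norm_num : (1:ℝ) < 2)).1 h1
      have h3 : (z:ℝ) < q * (Real.logb 2 v + 1) := by
        have h4 := mul_lt_mul_of_pos_left
          (show (z:ℝ)/q < Real.logb 2 v + 1 by linarith) hq0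
        rwa [mul_div_cancel₀ _ hq0.ne'] at h4
      have h4 := Int.le_ceil (q * (Real.logb 2 v + 1))
      have h5 : (z:ℝ) < (⌈q * (Real.logb 2 v + 1)⌉ : ℝ) := lt_of_lt_of_le h3 h4
      exact (Int.cast_lt.1 h5).le
    set F : ℤ → ℝ≥0∞ := fun k => (2:ℝ≥0∞) ^ ((k:ℝ) * s) * (if T k then a else 0) with hFdef
    by_cases hne : ∃ z : ℤ, T z
    · obtain ⟨K, hKT, hKmax⟩ := Int.exists_greatest_of_bdd hbdd hne
      have hFsupp : Function.support F ⊆ Set.range (fun j : ℕ => K - (j:ℤ)) := by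
        intro k hk
        have hTk : T k := by
          by_contra h
          apply hk
          simp only [hFdef, if_neg h, mul_zero]
        have hkK : k ≤ K := hKmax k hTk
        exact ⟨(K - k).toNat, by simp only; omega⟩
      have hinj : Function.Injective (fun j : ℕ => K - (j:ℤ)) := by
        intro a b h
        simp only at h
        omega
      have hre : (∑' j : ℕ, F (K - (j:ℤ))) = ∑' k : ℤ, F k := hinj.tsum_eq hFsupp
      -- bound 2^(K*s)
      have hKs : (2:ℝ≥0∞) ^ ((K:ℝ) * s) ≤ (2:ℝ≥0∞) ^ (q-1) * a ^ (q-1) := by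
        have hr1 : (2:ℝ) ^ ((K:ℝ)/q) < 2 * v := by
          have e0 : (2:ℝ) ^ ((K:ℝ)/q) = 2 * 2 ^ ((K:ℝ)/q - 1) := by
            have e0' : (2:ℝ) ^ ((K:ℝ)/q) = 2 ^ (1 + ((K:ℝ)/q - 1)) := by
              congr 1; ring
            rw [e0', Real.rpow_add two_pos, Real.rpow_one]
          rw [e0]
          have := hKT
          simp only [hTdef] at this
          linarith
        have hr2 : (2:ℝ) ^ ((K:ℝ) * s) ≤ (2 * v) ^ (q - 1) := by
          have e1 : (K:ℝ) * s = ((K:ℝ)/q) * (q - 1) := by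
            rw [hsdef]
            field_simp
            try ring
          rw [e1, Real.rpow_mul (by norm_num : (0:ℝ) ≤ 2)]
          exact Real.rpow_le_rpow (Real.rpow_pos_of_pos two_pos _).le hr1.le (by linarith)
        calc (2:ℝ≥0∞) ^ ((K:ℝ) * s) = ENNReal.ofReal 2 ^ ((K:ℝ) * s) := by norm_num
          _ = ENNReal.ofReal ((2:ℝ) ^ ((K:ℝ) * s)) := ENNReal.ofReal_rpow_of_pos two_pos
          _ ≤ ENNReal.ofReal ((2 * v) ^ (q - 1)) := ENNReal.ofReal_le_ofReal hr2
          _ = (ENNReal.ofReal (2 * v)) ^ (q - 1) :=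
              (ENNReal.ofReal_rpow_of_pos (by linarith)).symm
          _ = (2 * a) ^ (q - 1) := by
              rw [ENNReal.ofReal_mul (by norm_num)]
              norm_num
              rfl
          _ = (2:ℝ≥0∞) ^ (q-1) * a ^ (q-1) := ENNReal.mul_rpow_of_nonneg _ _ (by linarith)
      -- term bound
      have hterm : ∀ j : ℕ, F (K - (j:ℤ))
          ≤ ((2:ℝ≥0∞) ^ ((K:ℝ) * s) * a) * ((2:ℝ≥0∞) ^ (-s)) ^ j := by
        intro j
        have e1 : (2:ℝ≥0∞) ^ ((((K - (j:ℤ)) : ℤ) : ℝ) * s)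
            = (2:ℝ≥0∞) ^ ((K:ℝ) * s) * ((2:ℝ≥0∞) ^ (-s)) ^ j := by
          have c1 : (((K - (j:ℤ)) : ℤ) : ℝ) * s = (K:ℝ) * s + (-s) * (j:ℝ) := by
            push_cast; ring
          rw [c1, ENNReal.rpow_add _ _ (by norm_num) (by norm_num),
            ENNReal.rpow_mul 2 (-s) ((j:ℕ):ℝ), ENNReal.rpow_natCast]
        have hle : (if T (K - (j:ℤ)) then a else 0) ≤ a := by split <;> simp
        calc F (K - (j:ℤ))
            = (2:ℝ≥0∞) ^ ((((K - (j:ℤ)) : ℤ) : ℝ) * s) * (if T (K - (j:ℤ)) then a else 0) :=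
              rfl
          _ ≤ (2:ℝ≥0∞) ^ ((((K - (j:ℤ)) : ℤ) : ℝ) * s) * a := mul_le_mul_right hle _
          _ = ((2:ℝ≥0∞) ^ ((K:ℝ) * s) * a) * ((2:ℝ≥0∞) ^ (-s)) ^ j := by rw [e1]; ring
      have hrw : ∀ k : ℤ, (2:ℝ≥0∞) ^ ((k:ℝ) * s) *
          (if (2:ℝ) ^ ((k:ℝ)/q - 1) < v then a else 0) = F k := fun k => rfl
      have hpow : a ^ (q-1) * a = a ^ q := by
        calc a ^ (q-1) * a = a ^ (q-1) * a ^ (1:ℝ) := by rw [ENNReal.rpow_one]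
          _ = a ^ ((q-1)+1) := (ENNReal.rpow_add _ _ ha0 hat).symm
          _ = a ^ q := by norm_num
      calc (∑' k : ℤ, (2:ℝ≥0∞) ^ ((k:ℝ) * s) *
            (if (2:ℝ) ^ ((k:ℝ)/q - 1) < v then a else 0))
          = ∑' k : ℤ, F k := tsum_congr hrw
        _ = ∑' j : ℕ, F (K - (j:ℤ)) := hre.symm
        _ ≤ ∑' j : ℕ, ((2:ℝ≥0∞) ^ ((K:ℝ) * s) * a) * ((2:ℝ≥0∞) ^ (-s)) ^ j :=
            ENNReal.tsum_le_tsum hterm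
        _ = ((2:ℝ≥0∞) ^ ((K:ℝ) * s) * a) * (1 - (2:ℝ≥0∞) ^ (-s))⁻¹ := by
            rw [ENNReal.tsum_mul_left, ENNReal.tsum_geometric]
        _ ≤ (((2:ℝ≥0∞) ^ (q-1) * a ^ (q-1)) * a) * (1 - (2:ℝ≥0∞) ^ (-s))⁻¹ := by
            gcongr
        _ = (1 - (2:ℝ≥0∞) ^ (-s))⁻¹ * (2:ℝ≥0∞) ^ (q - 1) * a ^ q := by
            rw [mul_assoc ((2:ℝ≥0∞) ^ (q-1)) _ _, hpow]
            ring
    · push_neg at hne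
      have hzero : ∀ k : ℤ, F k = 0 := by
        intro k
        simp only [hFdef, if_neg (hne k), mul_zero]
      rw [show (∑' k : ℤ, (2:ℝ≥0∞) ^ ((k:ℝ) * s) *
          (if (2:ℝ) ^ ((k:ℝ)/q - 1) < v then a else 0)) = ∑' k : ℤ, F k from rfl,
        tsum_congr hzero, tsum_zero]
      exact zero_le

end CZAux


namespace CZAux

lemma level_subset {n : ℕ} (hn : 1 ≤ n) {q : ℝ} (hq : 1 < q) {f : Sp n → ℝ}
    (hf : Measurable f) (k : ℤ) :
    {x : Sp n | (2:ℝ≥0∞) ^ k < (maximalFn n {R | IsCZSet n R} f x) ^ q}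
      ⊆ {x : Sp n | ENNReal.ofReal ((2:ℝ) ^ ((k:ℝ)/q - 1))
          < maximalFn n {R | IsCZSet n R} (trunc ((2:ℝ) ^ ((k:ℝ)/q - 1)) f) x} := by
  set lam := (2:ℝ) ^ ((k:ℝ)/q - 1) with hlamdef
  have hlam : 0 < lam := Real.rpow_pos_of_pos two_pos _
  have hq0 : (0:ℝ) < q := lt_trans one_pos hq
  intro x hx
  simp only [Set.mem_setOf_eq] at hx ⊢
  by_contra hcon
  push_neg at hcon
  have h2 := maximalFn_le_add (trunc_split lam f) (trunc_enorm_measurable lam hf) x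
  have h3 := maximalFn_le_const (f := trunc' lam f)
    (Filter.Eventually.of_forall (trunc'_le hlam.le f)) x
  have hMf : maximalFn n {R | IsCZSet n R} f x ≤ ENNReal.ofReal (2 * lam) := by
    calc maximalFn n {R | IsCZSet n R} f x ≤ _ + _ := h2
      _ ≤ ENNReal.ofReal lam + ENNReal.ofReal lam := add_le_add hcon h3
      _ = ENNReal.ofReal (2 * lam) := by
          rw [← ENNReal.ofReal_add hlam.le hlam.le]
          ring_nf
  have e1 : 2 * lam = (2:ℝ) ^ ((k:ℝ)/q) := by
    have e0' : (2:ℝ) ^ ((k:ℝ)/q) = 2 ^ (1 + ((k:ℝ)/q - 1)) := by congr 1; ring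
    rw [hlamdef, e0', Real.rpow_add two_pos, Real.rpow_one]
  have e0 : ENNReal.ofReal (2 * lam) = (2:ℝ≥0∞) ^ ((k:ℝ)/q) := by
    calc ENNReal.ofReal (2 * lam) = ENNReal.ofReal ((2:ℝ) ^ ((k:ℝ)/q)) := by rw [e1]
      _ = ENNReal.ofReal 2 ^ ((k:ℝ)/q) := (ENNReal.ofReal_rpow_of_pos two_pos).symm
      _ = (2:ℝ≥0∞) ^ ((k:ℝ)/q) := by norm_num
  have e2 : ((2:ℝ≥0∞) ^ ((k:ℝ)/q)) ^ q = 2 ^ k := by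
    rw [← ENNReal.rpow_mul, div_mul_cancel₀ _ hq0.ne', ENNReal.rpow_intCast]
  have hlt : ENNReal.ofReal (2 * lam) < maximalFn n {R | IsCZSet n R} f x := by
    rw [e0]
    rw [← e2] at hx
    exact (ENNReal.rpow_lt_rpow_iff hq0).1 hx
  exact absurd (lt_of_lt_of_le hlt hMf) (lt_irrefl _)

set_option maxHeartbeats 1000000 in
lemma strongLp {n : ℕ} (hn : 1 ≤ n) {q : ℝ} (hq : 1 < q) {f : Sp n → ℝ}
    (hf : Measurable f) :
    ∫⁻ x, (maximalFn n {R | IsCZSet n R} f x) ^ q ∂volume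
      ≤ (8 * ENNReal.ofReal ((65536:ℝ) ^ (n+1)) * ((1 - (2:ℝ≥0∞) ^ (-(1 - 1/q)))⁻¹
          * (2:ℝ≥0∞) ^ (q - 1)))
        * ∫⁻ x, ((‖f x‖₊ : ℝ≥0∞)) ^ q ∂volume := by
  have hq0 : (0:ℝ) < q := lt_trans one_pos hq
  set Mf := maximalFn n {R | IsCZSet n R} f with hMfdef
  set lam : ℤ → ℝ := fun k => (2:ℝ) ^ ((k:ℝ)/q - 1) with hlamdef
  have hlampos : ∀ k, 0 < lam k := fun k => Real.rpow_pos_of_pos two_pos _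
  set A := ENNReal.ofReal ((65536:ℝ) ^ (n+1)) with hAdef
  set G := (1 - (2:ℝ≥0∞) ^ (-(1 - 1/q)))⁻¹ with hGdef
  set s : ℝ := 1 - 1/q with hsdef
  have step1 : ∫⁻ x, Mf x ^ q ∂volume
      ≤ ∑' k : ℤ, 2 ^ (k+2) * volume {x : Sp n | (2:ℝ≥0∞) ^ k < Mf x ^ q} :=
    lintegral_le_tsum_levels volume _
  have step2 : ∀ k : ℤ, volume {x : Sp n | (2:ℝ≥0∞) ^ k < Mf x ^ q}
      ≤ ENNReal.ofReal ((65536:ℝ)^(n+1) / lam k) *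
          ∫⁻ y, (‖trunc (lam k) f y‖₊ : ℝ≥0∞) ∂volume := by
    intro k
    calc volume {x : Sp n | (2:ℝ≥0∞) ^ k < Mf x ^ q}
        ≤ volume {x : Sp n | ENNReal.ofReal (lam k)
            < maximalFn n {R | IsCZSet n R} (trunc (lam k) f) x} :=
          measure_mono (level_subset hn hq hf k)
      _ ≤ _ := weak11 hn (trunc (lam k) f) (lam k) (hlampos k)
  have coef : ∀ k : ℤ, (2:ℝ≥0∞) ^ (k+2) * ENNReal.ofReal ((65536:ℝ)^(n+1) / lam k)
      = 8 * A * (2:ℝ≥0∞) ^ ((k:ℝ) * s) := by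
    intro k
    have c1 : ENNReal.ofReal ((65536:ℝ)^(n+1) / lam k)
        = A * (2:ℝ≥0∞) ^ (1 - (k:ℝ)/q) := by
      rw [ENNReal.ofReal_div_of_pos (hlampos k), div_eq_mul_inv]
      congr 1
      have c2 : ENNReal.ofReal (lam k) = (2:ℝ≥0∞) ^ ((k:ℝ)/q - 1) := by
        calc ENNReal.ofReal (lam k) = ENNReal.ofReal 2 ^ ((k:ℝ)/q - 1) :=
              (ENNReal.ofReal_rpow_of_pos two_pos).symm
          _ = (2:ℝ≥0∞) ^ ((k:ℝ)/q - 1) := by norm_num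
      rw [c2, ← ENNReal.rpow_neg]
      congr 1
      ring
    have c3 : (2:ℝ≥0∞) ^ (k+2) = (2:ℝ≥0∞) ^ (((k:ℝ)) + 2) := by
      rw [← ENNReal.rpow_intCast]
      congr 1
      push_cast
      ring
    rw [c1, c3, ← mul_assoc, mul_comm ((2:ℝ≥0∞) ^ (((k:ℝ)) + 2)) A, mul_assoc A _ _,
      ← ENNReal.rpow_add _ _ (by norm_num) (by norm_num)]
    rw [show ((k:ℝ) + 2) + (1 - (k:ℝ)/q) = 3 + (k:ℝ) * s by rw [hsdef]; field_simp; ring]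
    rw [ENNReal.rpow_add _ _ (by norm_num) (by norm_num)]
    rw [show ((3:ℝ)) = ((3:ℕ):ℝ) by norm_num, ENNReal.rpow_natCast]
    norm_num
    ring
  have hindm : ∀ k : ℤ, Measurable fun y : Sp n =>
      (2:ℝ≥0∞) ^ ((k:ℝ) * s) * (‖trunc (lam k) f y‖₊ : ℝ≥0∞) :=
    fun k => (trunc_enorm_measurable (lam k) hf).const_mul _
  have hGne : G ≠ ⊤ := by
    rw [hGdef, Ne, ENNReal.inv_eq_top, tsub_eq_zero_iff_le]
    intro hcon
    have h1 : (2:ℝ≥0∞) ^ (-s) < 2 ^ (0:ℝ) := by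
      apply ENNReal.rpow_lt_rpow_of_exponent_lt (by norm_num) (by norm_num)
      have hs : 0 < s := by
        have : 1/q < 1 := by rw [div_lt_one hq0]; exact hq
        rw [hsdef]; linarith
      linarith
    rw [ENNReal.rpow_zero] at h1
    exact absurd (lt_of_le_of_lt hcon h1) (lt_irrefl _)
  have h2qne : (2:ℝ≥0∞) ^ (q-1) ≠ ⊤ :=
    ENNReal.rpow_ne_top_of_nonneg (by linarith) (by norm_num)
  calc ∫⁻ x, Mf x ^ q ∂volume
      ≤ ∑' k : ℤ, 2 ^ (k+2) * volume {x : Sp n | (2:ℝ≥0∞) ^ k < Mf x ^ q} := step1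
    _ ≤ ∑' k : ℤ, 2 ^ (k+2) * (ENNReal.ofReal ((65536:ℝ)^(n+1) / lam k) *
          ∫⁻ y, (‖trunc (lam k) f y‖₊ : ℝ≥0∞) ∂volume) :=
        ENNReal.tsum_le_tsum (fun k => mul_le_mul_right (step2 k) _)
    _ = ∑' k : ℤ, (8 * A) * ∫⁻ y, (2:ℝ≥0∞) ^ ((k:ℝ) * s) *
          (‖trunc (lam k) f y‖₊ : ℝ≥0∞) ∂volume := by
        apply tsum_congr
        intro k
        rw [← mul_assoc, coef k, lintegral_const_mul _ (trunc_enorm_measurable (lam k) hf)]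
        ring
    _ = (8 * A) * ∑' k : ℤ, ∫⁻ y, (2:ℝ≥0∞) ^ ((k:ℝ) * s) *
          (‖trunc (lam k) f y‖₊ : ℝ≥0∞) ∂volume := ENNReal.tsum_mul_left
    _ = (8 * A) * ∫⁻ y, ∑' k : ℤ, (2:ℝ≥0∞) ^ ((k:ℝ) * s) *
          (‖trunc (lam k) f y‖₊ : ℝ≥0∞) ∂volume := by
        rw [← lintegral_tsum (fun k => (hindm k).aemeasurable)]
    _ ≤ (8 * A) * ∫⁻ y, (G * (2:ℝ≥0∞) ^ (q - 1)) * ((‖f y‖₊ : ℝ≥0∞)) ^ q ∂volume := by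
        apply mul_le_mul_right
        apply lintegral_mono
        intro y
        dsimp only
        have hconv : ∀ k : ℤ, (2:ℝ≥0∞) ^ ((k:ℝ) * s) * (‖trunc (lam k) f y‖₊ : ℝ≥0∞)
            = (2:ℝ≥0∞) ^ ((k:ℝ) * s) *
              (if (2:ℝ) ^ ((k:ℝ)/q - 1) < |f y| then ENNReal.ofReal |f y| else 0) := by
          intro k
          congr 1
          rw [trunc_enorm, Set.indicator_apply]
          simp only [Set.mem_setOf_eq]
          split
          · rw [← enorm_eq_nnnorm, Real.enorm_eq_ofReal_abs]
          · rfl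
        rw [tsum_congr hconv]
        calc (∑' k : ℤ, (2:ℝ≥0∞) ^ ((k:ℝ) * s) *
              (if (2:ℝ) ^ ((k:ℝ)/q - 1) < |f y| then ENNReal.ofReal |f y| else 0))
            ≤ G * (2:ℝ≥0∞) ^ (q - 1) * (ENNReal.ofReal |f y|) ^ q :=
              inner_sum_le hq |f y| (abs_nonneg _)
          _ = (G * (2:ℝ≥0∞) ^ (q - 1)) * ((‖f y‖₊ : ℝ≥0∞)) ^ q := by
              rw [← Real.enorm_eq_ofReal_abs, enorm_eq_nnnorm]
    _ = (8 * A * (G * (2:ℝ≥0∞) ^ (q - 1))) * ∫⁻ x, ((‖f x‖₊ : ℝ≥0∞)) ^ q ∂volume := by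
        rw [lintegral_const_mul' _ _ (ENNReal.mul_ne_top hGne h2qne)]
        ring

end CZAux


/-- The Hardy–Littlewood maximal operator `ℳ` (associated with the family
`ℛ` of Calderón–Zygmund sets) is bounded from `L¹(ρ)` to `L^{1,∞}(ρ)`, and bounded on
`L^p(ρ)` for all `p ∈ (1, ∞]`. -/
theorem maximal_weak_one_one_and_strong_p (n : ℕ) (hn : 1 ≤ n) :
    (∃ C : ℝ, 0 < C ∧ ∀ f : Sp n → ℝ, Integrable f volume → ∀ α : ℝ, 0 < α →
      volume {x : Sp n | ENNReal.ofReal α < maximalFn n {R | IsCZSet n R} f x}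
        ≤ ENNReal.ofReal (C / α) * ∫⁻ x, ‖f x‖₊ ∂volume) ∧
    (∀ p : ℝ≥0∞, 1 < p → ∃ C : ℝ, 0 < C ∧ ∀ f : Sp n → ℝ, MemLp f p volume →
      lpNormE (maximalFn n {R | IsCZSet n R} f) p volume
        ≤ ENNReal.ofReal C * eLpNorm f p volume) := by
  constructor
  · exact ⟨(65536:ℝ)^(n+1), by positivity, fun f _ α hα => CZAux.weak11 hn f α hα⟩
  · intro p hp
    by_cases hptop : p = ∞
    · refine ⟨1, one_pos, ?_⟩
      intro f hf
      subst hptop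
      rw [lpNormE, if_pos rfl]
      have hb : ∀ x, maximalFn n {R | IsCZSet n R} f x ≤ eLpNormEssSup f volume :=
        fun x => CZAux.maximalFn_le_const (enorm_ae_le_eLpNormEssSup f volume) x
      calc essSup (maximalFn n {R | IsCZSet n R} f) volume
          ≤ eLpNormEssSup f volume :=
            essSup_le_of_ae_le _ (Filter.Eventually.of_forall hb)
        _ = eLpNorm f ∞ volume := eLpNorm_exponent_top.symm
        _ = ENNReal.ofReal 1 * eLpNorm f ∞ volume := by
            rw [ENNReal.ofReal_one, one_mul]
    · set q := p.toReal with hqdef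
      have hp0 : p ≠ 0 := (lt_trans zero_lt_one hp).ne'
      have hq : 1 < q := by
        have h1 := (ENNReal.toReal_lt_toReal (by norm_num : (1:ℝ≥0∞) ≠ ⊤) hptop).2 hp
        simpa using h1
      have hq0 : (0:ℝ) < q := lt_trans one_pos hq
      set Cq : ℝ≥0∞ := 8 * ENNReal.ofReal ((65536:ℝ)^(n+1)) *
        ((1 - (2:ℝ≥0∞)^(-(1-1/q)))⁻¹ * (2:ℝ≥0∞)^(q-1)) with hCqdef
      have hGne : (1 - (2:ℝ≥0∞)^(-(1-1/q)))⁻¹ ≠ ⊤ := by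
        rw [Ne, ENNReal.inv_eq_top, tsub_eq_zero_iff_le]
        intro hcon
        have h1 : (2:ℝ≥0∞) ^ (-(1-1/q)) < 2 ^ (0:ℝ) := by
          apply ENNReal.rpow_lt_rpow_of_exponent_lt (by norm_num) (by norm_num)
          have : 1/q < 1 := by rw [div_lt_one hq0]; exact hq
          linarith
        rw [ENNReal.rpow_zero] at h1
        exact absurd (lt_of_le_of_lt hcon h1) (lt_irrefl _)
      have hCqne : Cq ≠ ⊤ := by
        rw [hCqdef]
        apply ENNReal.mul_ne_top
        · exact ENNReal.mul_ne_top (by norm_num) ENNReal.ofReal_ne_top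
        · exact ENNReal.mul_ne_top hGne
            (ENNReal.rpow_ne_top_of_nonneg (by linarith) (by norm_num))
      refine ⟨(Cq ^ (1/q)).toReal + 1, by positivity, ?_⟩
      intro f hf
      set g := hf.aestronglyMeasurable.mk f with hgdef
      have hgm : StronglyMeasurable g := hf.aestronglyMeasurable.stronglyMeasurable_mk
      have hae : f =ᵐ[(volume : Measure (Sp n))] g := hf.aestronglyMeasurable.ae_eq_mk
      have hMeq : maximalFn n {R | IsCZSet n R} f = maximalFn n {R | IsCZSet n R} g :=
        CZAux.maximalFn_congr _ hae
      have hNeq : eLpNorm f p volume = eLpNorm g p volume := eLpNorm_congr_ae hae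
      rw [lpNormE, if_neg hptop, hMeq, hNeq]
      have hstrong := CZAux.strongLp hn hq hgm.measurable
      calc (∫⁻ x, (maximalFn n {R | IsCZSet n R} g x) ^ p.toReal ∂volume) ^ (1 / p.toReal)
          ≤ (Cq * ∫⁻ x, ((‖g x‖₊ : ℝ≥0∞)) ^ q ∂volume) ^ (1/q) := by
            apply ENNReal.rpow_le_rpow _ (by positivity)
            exact hstrong
        _ = Cq ^ (1/q) * (∫⁻ x, ((‖g x‖₊ : ℝ≥0∞)) ^ q ∂volume) ^ (1/q) :=
            ENNReal.mul_rpow_of_nonneg _ _ (by positivity)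
        _ = Cq ^ (1/q) * eLpNorm g p volume := by
            rw [eLpNorm_eq_lintegral_rpow_enorm_toReal hp0 hptop]
            rfl
        _ ≤ ENNReal.ofReal ((Cq ^ (1/q)).toReal + 1) * eLpNorm g p volume := by
            apply mul_le_mul_left
            have hne : Cq ^ (1/q) ≠ ⊤ :=
              ENNReal.rpow_ne_top_of_nonneg (by positivity) hCqne
            calc Cq ^ (1/q) = ENNReal.ofReal ((Cq ^ (1/q)).toReal) :=
                  (ENNReal.ofReal_toReal hne).symm
              _ ≤ ENNReal.ofReal ((Cq ^ (1/q)).toReal + 1) :=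
                  ENNReal.ofReal_le_ofReal (by linarith)
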